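/- Let d ≥ 1, γ ∈ (0, 1], and λ > 0. Let K : ℝ^d → ℝ be Lebesgue integrable with ∫_{ℝ^d} K(z) dz = 1 and ∫_{ℝ^d} ‖z‖^γ |K(z)| dz < ∞. Let f : ℝ^d → ℝ be bounded and satisfy |f(y) − f(x)| ≤ λ‖y − x‖^γ for all x, y ∈ ℝ^d. Then for every h > 0 and every x ∈ ℝ^d, | ∫_{ℝ^d} h^{−d} K((x − y)/h) f(y) dy − f(x) | ≤ λ · h^γ · ∫_{ℝ^d} ‖z‖^γ |K(z)| dz. -/

import Mathlib

open MeasureTheory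

noncomputable section

set_option maxHeartbeats 1000000 in
theorem stmt18 (d : ℕ) (hd : 1 ≤ d) (γ lam : ℝ) (hγ : 0 < γ) (hγ' : γ ≤ 1) (hlam : 0 < lam)
    (K : EuclideanSpace ℝ (Fin d) → ℝ) (hK : Integrable K)
    (hK1 : (∫ z, K z) = 1)
    (hKmom : Integrable (fun z : EuclideanSpace ℝ (Fin d) => ‖z‖ ^ γ * |K z|))
    (f : EuclideanSpace ℝ (Fin d) → ℝ) (C : ℝ) (hfb : ∀ x, |f x| ≤ C)
    (hfH : ∀ x y : EuclideanSpace ℝ (Fin d), |f y - f x| ≤ lam * ‖y - x‖ ^ γ)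
    (h : ℝ) (hh : 0 < h) (x : EuclideanSpace ℝ (Fin d)) :
    |(∫ y : EuclideanSpace ℝ (Fin d), (h ^ d)⁻¹ * K (h⁻¹ • (x - y)) * f y) - f x|
      ≤ lam * h ^ γ * ∫ z : EuclideanSpace ℝ (Fin d), ‖z‖ ^ γ * |K z| := by
  have hh0 : (h : ℝ) ≠ 0 := ne_of_gt hh
  -- continuity of f
  have hfc : Continuous f := by
    rw [continuous_iff_continuousAt]
    intro a
    rw [ContinuousAt, tendsto_iff_dist_tendsto_zero]
    apply squeeze_zero (fun y => dist_nonneg)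
      (g := fun y => lam * ‖y - a‖ ^ γ)
      (fun y => by rw [Real.dist_eq]; exact hfH a y)
    have h1 : Filter.Tendsto (fun y : EuclideanSpace ℝ (Fin d) => ‖y - a‖) (nhds a) (nhds 0) := by
      have := ((continuous_id.sub continuous_const).norm :
        Continuous fun y : EuclideanSpace ℝ (Fin d) => ‖y - a‖)
      simpa using this.tendsto a
    have h2 : Filter.Tendsto (fun t : ℝ => lam * t ^ γ) (nhds 0) (nhds 0) := by
      have hc : ContinuousAt (fun t : ℝ => t ^ γ) 0 :=
        Real.continuousAt_rpow_const 0 γ (Or.inr hγ.le)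
      have := (hc.const_smul lam).tendsto
      simpa [Real.zero_rpow hγ.ne', Pi.smul_def, smul_eq_mul] using this
    exact h2.comp h1
  -- change of variables
  have hD : Module.finrank ℝ (EuclideanSpace ℝ (Fin d)) = d := by simp
  set F : EuclideanSpace ℝ (Fin d) → ℝ :=
    fun y => (h ^ d)⁻¹ * K (h⁻¹ • y) * f (x - y) with hF
  have step1 : (∫ y : EuclideanSpace ℝ (Fin d), (h ^ d)⁻¹ * K (h⁻¹ • (x - y)) * f y)
      = ∫ y, F y := by
    rw [← integral_sub_left_eq_self F volume x]
    congr 1; ext y; simp [hF]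
  have step2 : (∫ y, F y) = ∫ z : EuclideanSpace ℝ (Fin d), K z * f (x - h • z) := by
    have := Measure.integral_comp_smul_of_nonneg (volume : Measure (EuclideanSpace ℝ (Fin d))) F h
      (hR := le_of_lt hh)
    rw [hD] at this
    have hFh : (fun z : EuclideanSpace ℝ (Fin d) => F (h • z))
        = fun z => (h ^ d)⁻¹ * (K z * f (x - h • z)) := by
      ext z
      simp [hF, smul_smul, inv_mul_cancel₀ hh0, mul_assoc]
    rw [hFh, integral_const_mul, smul_eq_mul] at this
    exact (mul_left_cancel₀ (inv_ne_zero (pow_ne_zero d hh0)) this).symm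
  -- integrability facts
  have hC : 0 ≤ C := le_trans (abs_nonneg _) (hfb x)
  have hmg : AEStronglyMeasurable (fun z : EuclideanSpace ℝ (Fin d) => f (x - h • z)) volume :=
    (hfc.comp (by fun_prop :
      Continuous fun z : EuclideanSpace ℝ (Fin d) => x - h • z)).aestronglyMeasurable
  have I1 : Integrable (fun z : EuclideanSpace ℝ (Fin d) => K z * f (x - h • z)) := by
    have := hK.bdd_mul hmg (c := C) (Filter.Eventually.of_forall fun z => by simpa [Real.norm_eq_abs] using hfb (x - h • z))
    simpa [mul_comm] using this
  have I2 : Integrable (fun z : EuclideanSpace ℝ (Fin d) => K z * f x) := hK.mul_const (f x)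
  -- rewrite f x as integral
  have step3 : f x = ∫ z : EuclideanSpace ℝ (Fin d), K z * f x := by
    rw [integral_mul_const, hK1, one_mul]
  rw [step1, step2]
  nth_rewrite 1 [step3]
  rw [← integral_sub I1 I2]
  have key : ∀ z : EuclideanSpace ℝ (Fin d),
      |K z * f (x - h • z) - K z * f x| ≤ lam * h ^ γ * (‖z‖ ^ γ * |K z|) := by
    intro z
    rw [← mul_sub, abs_mul]
    have h1 : |f (x - h • z) - f x| ≤ lam * ‖h • z‖ ^ γ := by
      have := hfH x (x - h • z)
      simpa [norm_smul] using this
    have h2 : ‖h • z‖ ^ γ = h ^ γ * ‖z‖ ^ γ := by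
      rw [norm_smul, Real.norm_eq_abs, abs_of_pos hh, Real.mul_rpow (le_of_lt hh) (norm_nonneg z)]
    calc |K z| * |f (x - h • z) - f x| ≤ |K z| * (lam * (h ^ γ * ‖z‖ ^ γ)) := by
          apply mul_le_mul_of_nonneg_left _ (abs_nonneg _)
          rw [← h2]; exact h1
      _ = lam * h ^ γ * (‖z‖ ^ γ * |K z|) := by ring
  calc |∫ z : EuclideanSpace ℝ (Fin d), (K z * f (x - h • z) - K z * f x)|
      ≤ ∫ z : EuclideanSpace ℝ (Fin d), |K z * f (x - h • z) - K z * f x| :=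
        by simpa [Real.norm_eq_abs] using
          norm_integral_le_integral_norm fun z : EuclideanSpace ℝ (Fin d) => K z * f (x - h • z) - K z * f x
    _ ≤ ∫ z : EuclideanSpace ℝ (Fin d), lam * h ^ γ * (‖z‖ ^ γ * |K z|) := by
        apply integral_mono (I1.sub I2).abs (hKmom.const_mul _) key
    _ = lam * h ^ γ * ∫ z : EuclideanSpace ℝ (Fin d), ‖z‖ ^ γ * |K z| := by
        rw [integral_const_mul]
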